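/- Shifting Lemma: Let F be a forest of an X-tree, let e and f be edges of F, and let E be a set of edges of F with f ∈ E and e ∉ E. Let v_f be the endpoint of f closest to e and v_e an endpoint of e. If v_f is connected to v_e in F − E, and no labelled node x of F is connected to v_f in F − (E ∪ {e}), then F ÷ E = F ÷ ((E ∖ {f}) ∪ {e}). -/

import Mathlib

namespace Phylo

/-- Rooted binary phylogenetic tree with leaves labelled by `X`. -/
inductive PT (X : Type) where
  | leaf : X → PT X
  | node : PT X → PT X → PT X
deriving DecidableEq

variable {X : Type} [DecidableEq X]

/-- The multiset of leaf labels of a tree. -/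
def labels : PT X → Multiset X
  | .leaf x => {x}
  | .node l r => labels l + labels r

/-- The finite set of leaf labels of a tree. -/
def labs : PT X → Finset X
  | .leaf x => {x}
  | .node l r => labs l ∪ labs r

/-- The multiset of leaf labels of a forest. -/
def labelsF (F : Multiset (PT X)) : Multiset X := (F.map labels).sum

/-- `Sub u t`: `u` occurs as a rooted subtree (i.e. a node) of `t`. -/
inductive Sub : PT X → PT X → Prop
  | refl (t : PT X) : Sub t t
  | left {u l r : PT X} : Sub u l → Sub u (PT.node l r)
  | right {u l r : PT X} : Sub u r → Sub u (PT.node l r)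

/-- Boolean version of `Sub`. -/
def subB : PT X → PT X → Bool
  | u, .leaf x => decide (u = .leaf x)
  | u, .node l r => decide (u = .node l r) || subB u l || subB u r

/-- The finite set of all rooted subtrees (nodes) of a tree. -/
def subtrees : PT X → Finset (PT X)
  | .leaf x => {.leaf x}
  | .node l r => insert (.node l r) (subtrees l ∪ subtrees r)

/-- A node of a forest, identified with the subtree below it. -/
def NodeOf (F : Multiset (PT X)) (u : PT X) : Prop := ∃ C ∈ F, Sub u C

/-- Cut the edges above the subtrees in `E`, suppressing unlabelled nodes with
fewer than two children.  Returns the component containing the root (if any)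
together with the multiset of detached components. -/
def cutAll (E : Finset (PT X)) : PT X → Option (PT X) × Multiset (PT X)
  | .leaf x => (some (.leaf x), 0)
  | .node l r =>
    let pl := cutAll E l
    let pr := cutAll E r
    let lk : Option (PT X) := if l ∈ E then none else pl.1
    let lM : Multiset (PT X) :=
      if l ∈ E then pl.2 + (↑pl.1.toList : Multiset (PT X)) else pl.2
    let rk : Option (PT X) := if r ∈ E then none else pr.1
    let rM : Multiset (PT X) :=
      if r ∈ E then pr.2 + (↑pr.1.toList : Multiset (PT X)) else pr.2
    (match lk, rk with
      | some a, some b => some (.node a b)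
      | some a, none => some a
      | none, some b => some b
      | none, none => none,
     lM + rM)

/-- `F ÷ E`: the forest yielded by deleting the edges in `E` from the forest
`F` (an edge is identified by the subtree hanging below it) and suppressing
unlabelled nodes with fewer than two children. -/
def divF (F : Multiset (PT X)) (E : Finset (PT X)) : Multiset (PT X) :=
  (F.map (fun t => (↑(cutAll E t).1.toList : Multiset (PT X)) + (cutAll E t).2)).sum

/-- `F` is a forest of the forest `G`. -/
def ForestOf (F G : Multiset (PT X)) : Prop := ∃ E : Finset (PT X), divF G E = F

/-- `F` is an agreement forest of the trees `T₁` and `T₂`. -/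
def IsAF (F : Multiset (PT X)) (T₁ T₂ : PT X) : Prop :=
  ForestOf F {T₁} ∧ ForestOf F {T₂}

/-- The minimum number of edges that must be cut in `F` to obtain an
agreement forest of `T₁` and `T₂`. -/
noncomputable def ecut (T₁ T₂ : PT X) (F : Multiset (PT X)) : ℕ :=
  sInf {n | ∃ E : Finset (PT X), E.card = n ∧ IsAF (divF F E) T₁ T₂}

/-- The number of components of a maximum agreement forest. -/
noncomputable def maf (T₁ T₂ : PT X) : ℕ :=
  sInf {n | ∃ F : Multiset (PT X), IsAF F T₁ T₂ ∧ Multiset.card F = n}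

/-- `u` is the smallest subtree of `t` containing all labels in `S`
(the LCA of `S` in `t`). -/
def IsLCA (t : PT X) (S : Finset X) (u : PT X) : Prop :=
  Sub u t ∧ S ⊆ labs u ∧ ∀ v, Sub v u → S ⊆ labs v → v = u

/-- In `t`, the LCA of `S₁` is an ancestor of the LCA of `S₂`. -/
def Anc (t : PT X) (S₁ S₂ : Finset X) : Prop :=
  ∃ u v, IsLCA t S₁ u ∧ IsLCA t S₂ v ∧ Sub v u

/-- In `t`, the LCA of `S₁` is a proper ancestor of the LCA of `S₂`. -/
def PAnc (t : PT X) (S₁ S₂ : Finset X) : Prop :=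
  ∃ u v, IsLCA t S₁ u ∧ IsLCA t S₂ v ∧ Sub v u ∧ v ≠ u

/-- Edge of the cycle graph of an agreement forest of `T₁` and `T₂`:
the root of component `C` maps to an ancestor of the root of `C'`
in `T₁` or in `T₂`. -/
def CEdge (T₁ T₂ : PT X) (C C' : PT X) : Prop :=
  C ≠ C' ∧ (Anc T₁ (labs C) (labs C') ∨ Anc T₂ (labs C) (labs C'))

/-- The cycle graph of `F` (w.r.t. `T₁`, `T₂`) contains a directed cycle. -/
def HasCycle (T₁ T₂ : PT X) (F : Multiset (PT X)) : Prop :=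
  ∃ (C : PT X) (l : List (PT X)), C ∈ F ∧ (∀ D ∈ l, D ∈ F) ∧
    List.Chain (CEdge T₁ T₂) C (l ++ [C])

/-- `F` is an acyclic agreement forest of `T₁` and `T₂`. -/
def IsAAF (F : Multiset (PT X)) (T₁ T₂ : PT X) : Prop :=
  IsAF F T₁ T₂ ∧ ¬ HasCycle T₁ T₂ F

/-- The minimum number of edges that must be cut in `F` to obtain an
acyclic agreement forest of `T₁` and `T₂`. -/
noncomputable def aecut (T₁ T₂ : PT X) (F : Multiset (PT X)) : ℕ :=
  sInf {n | ∃ E : Finset (PT X), E.card = n ∧ IsAAF (divF F E) T₁ T₂}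

/-- The number of components of a maximum acyclic agreement forest. -/
noncomputable def maaf (T₁ T₂ : PT X) : ℕ :=
  sInf {n | ∃ F : Multiset (PT X), IsAAF F T₁ T₂ ∧ Multiset.card F = n}

/-- `a` and `c` are siblings in some component of `F`. -/
def SiblingIn (F : Multiset (PT X)) (a c : PT X) : Prop :=
  ∃ C ∈ F, Sub (PT.node a c) C ∨ Sub (PT.node c a) C

/-- `(a,c)` is a sibling pair of `F₁`: `a` and `c` have a common parent in
`F₁` and both exist in `F₂`. -/
def SiblingPair (F₁ F₂ : Multiset (PT X)) (a c : PT X) : Prop :=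
  SiblingIn F₁ a c ∧ (∃ C ∈ F₂, Sub a C) ∧ (∃ C ∈ F₂, Sub c C)

/-- The nodes `a` and `c` lie in the same component of `F`. -/
def SameComp (F : Multiset (PT X)) (a c : PT X) : Prop :=
  ∃ C ∈ F, Sub a C ∧ Sub c C

/-- The leaves labelled `a` and `b` lie in the same component of `F`. -/
def SameCompLabel (F : Multiset (PT X)) (a b : X) : Prop :=
  ∃ C ∈ F, a ∈ labs C ∧ b ∈ labs C

/-- `ab|c` is a triple of the forest `F`. -/
def IsTriple (F : Multiset (PT X)) (a b c : X) : Prop :=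
  ∃ C ∈ F, ∃ u, Sub u C ∧ a ∈ labs u ∧ b ∈ labs u ∧ c ∈ labs C ∧ c ∉ labs u

/-- `UpChain x m bs`: walking up from node `x` to node `m`, the siblings
encountered (the pendant nodes of the path) are `bs`, in order. -/
inductive UpChain : PT X → PT X → List (PT X) → Prop
  | nil (x : PT X) : UpChain x x []
  | consL {x m b : PT X} {bs : List (PT X)} :
      UpChain (PT.node x b) m bs → UpChain x m (b :: bs)
  | consR {x m b : PT X} {bs : List (PT X)} :
      UpChain (PT.node b x) m bs → UpChain x m (b :: bs)

/-- `CutEdge T R s`: cutting one edge of `T` (and suppressing the resulting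
degree-two node) leaves the tree `R` and detaches the subtree `s`. -/
inductive CutEdge : PT X → PT X → PT X → Prop
  | cutL (l r : PT X) : CutEdge (.node l r) r l
  | cutR (l r : PT X) : CutEdge (.node l r) l r
  | inL {l l' s : PT X} (r : PT X) : CutEdge l l' s → CutEdge (.node l r) (.node l' r) s
  | inR {r r' s : PT X} (l : PT X) : CutEdge r r' s → CutEdge (.node l r) (.node l r') s

/-- `Graft s R T'`: `T'` is obtained from `R` by subdividing an edge of `R`
(or adding a new root) and attaching `s` below the new node. -/
inductive Graft (s : PT X) : PT X → PT X → Prop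
  | here (t : PT X) : Graft s t (.node s t)
  | here' (t : PT X) : Graft s t (.node t s)
  | inL {l l' : PT X} (r : PT X) : Graft s l l' → Graft s (.node l r) (.node l' r)
  | inR {r r' : PT X} (l : PT X) : Graft s r r' → Graft s (.node l r) (.node l r')

/-- A single subtree prune-and-regraft operation. -/
def SprStep (T T' : PT X) : Prop := ∃ R s, CutEdge T R s ∧ Graft s R T'

/-- `n` SPR operations transform the first tree into the second. -/
def SprN : ℕ → PT X → PT X → Prop
  | 0 => fun T T' => T = T'
  | n + 1 => fun T T'' => ∃ T', SprStep T T' ∧ SprN n T' T''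

/-- The SPR distance. -/
noncomputable def dspr (T₁ T₂ : PT X) : ℕ := sInf {n | SprN n T₁ T₂}

/-- The edges on the path from node `v` to the root of the component `C`
(each edge identified by the subtree below it). -/
def pathEdges (C v : PT X) : Finset (PT X) :=
  (subtrees C).filter (fun s => subB v s ∧ s ≠ C)

/-- `HybEdge T ρ F u C`: the expanded cycle graph of `F` has a `T`-hybrid edge
from the node `u` of `F` to the root of the component `C ≠ C_ρ` of `F`;
`u` is the lowest node of `F` whose image in `T` is a proper ancestor of the
image of the root of `C`. -/
def HybEdge (T : PT X) (ρ : X) (F : Multiset (PT X)) (u C : PT X) : Prop :=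
  C ∈ F ∧ ρ ∉ labs C ∧ NodeOf F u ∧ PAnc T (labs u) (labs C) ∧
    ∀ u', NodeOf F u' → PAnc T (labs u') (labs C) → Anc T (labs u') (labs u)

/-- Edge of the expanded cycle graph `ecyc(F)`: either a tree edge of `F`
(directed away from the root) or a hybrid edge. -/
def EcycEdge (T₁ T₂ : PT X) (ρ : X) (F : Multiset (PT X)) (u v : PT X) : Prop :=
  (NodeOf F u ∧ ∃ l r, u = PT.node l r ∧ (v = l ∨ v = r))
  ∨ HybEdge T₁ ρ F u v ∨ HybEdge T₂ ρ F u v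

/-- The expanded cycle graph of `F` contains a directed cycle. -/
def HasCycleE (T₁ T₂ : PT X) (ρ : X) (F : Multiset (PT X)) : Prop :=
  ∃ (u : PT X) (l : List (PT X)), NodeOf F u ∧ (∀ w ∈ l, NodeOf F w) ∧
    List.Chain (EcycEdge T₁ T₂ ρ F) u (l ++ [u])

/-- The set of potential exit nodes of `F`: tails of hybrid edges of
`ecyc(F)`. -/
def pen (T₁ T₂ : PT X) (ρ : X) (F : Multiset (PT X)) : Set (PT X) :=
  {u | ∃ C, HybEdge T₁ ρ F u C ∨ HybEdge T₂ ρ F u C}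

/-- The edge above `s` lies on the path from node `a` up to node `m`. -/
def OnPathUp (a m s : PT X) : Prop := Sub a s ∧ Sub s m ∧ s ≠ m

/-- `a` and `b` are connected in `F − E` (deleting the edges in `E`,
without suppression). -/
def ConnAvoiding (F : Multiset (PT X)) (E : Finset (PT X)) (a b : PT X) : Prop :=
  ∃ C ∈ F, ∃ m, Sub m C ∧ Sub a m ∧ Sub b m ∧
    ∀ s ∈ E, ¬ OnPathUp a m s ∧ ¬ OnPathUp b m s

/-- `v` is an endpoint of the edge above `s` in `F`. -/
def IsEndpoint (F : Multiset (PT X)) (s v : PT X) : Prop :=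
  v = s ∨ (NodeOf F v ∧ ∃ w, v = PT.node s w ∨ v = PT.node w s)

/-- Components `C` and `C'` (of some forest) overlap in the forest `F₁`. -/
def Overlap (F₁ : Multiset (PT X)) (C C' : PT X) : Prop :=
  ∃ a b c d : X, a ∈ labs C ∧ b ∈ labs C ∧ c ∈ labs C' ∧ d ∈ labs C' ∧
    ∃ D ∈ F₁, a ∈ labs D ∧ b ∈ labs D ∧ c ∈ labs D ∧ d ∈ labs D ∧
      ∃ s, Sub s D ∧ s ≠ D ∧
        Xor' (a ∈ labs s) (b ∈ labs s) ∧ Xor' (c ∈ labs s) (d ∈ labs s)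


/-! ### Auxiliary lemmas for the shifting lemma -/

section ShiftAux
set_option linter.unusedSectionVars false

variable {X : Type} [DecidableEq X]

/-- Size of a tree. -/
def psz : PT X → ℕ
  | .leaf _ => 1
  | .node l r => psz l + psz r + 1

lemma Sub.psz_le {u t : PT X} (h : Sub u t) : psz u ≤ psz t := by
  induction h with
  | refl => exact le_refl _
  | left _ ih => simp only [psz]; omega
  | right _ ih => simp only [psz]; omega

lemma Sub.trans' {a b c : PT X} (h1 : Sub a b) (h2 : Sub b c) : Sub a c := by
  induction h2 with
  | refl => exact h1
  | left _ ih => exact Sub.left ih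
  | right _ ih => exact Sub.right ih

lemma Sub.eq_of_psz {u t : PT X} (h : Sub u t) (hsz : psz t ≤ psz u) : u = t := by
  induction h with
  | refl => rfl
  | @left l r h _ =>
      have := h.psz_le
      simp only [psz] at hsz; omega
  | @right l r h _ =>
      have := h.psz_le
      simp only [psz] at hsz; omega

lemma Sub.antisymm' {u t : PT X} (h1 : Sub u t) (h2 : Sub t u) : u = t :=
  h1.eq_of_psz h2.psz_le

lemma sub_node_inv {u l r : PT X} (h : Sub u (.node l r)) :
    u = PT.node l r ∨ Sub u l ∨ Sub u r := by
  cases h with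
  | refl => exact Or.inl rfl
  | left h => exact Or.inr (Or.inl h)
  | right h => exact Or.inr (Or.inr h)

lemma labels_le_of_sub {u t : PT X} (h : Sub u t) : labels u ≤ labels t := by
  induction h with
  | refl => exact le_refl _
  | @left l r _ ih =>
      exact le_trans ih (by simp only [labels]; exact Multiset.le_add_right _ _)
  | @right l r _ ih =>
      exact le_trans ih (by simp only [labels]; exact Multiset.le_add_left _ _)

lemma labels_nonempty (t : PT X) : ∃ x, x ∈ labels t := by
  induction t with
  | leaf x => exact ⟨x, by simp [labels]⟩
  | node l r ihl ihr =>
      obtain ⟨x, hx⟩ := ihl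
      exact ⟨x, by simp only [labels, Multiset.mem_add]; exact Or.inl hx⟩

lemma mem_labels_of_sub {x : X} {u t : PT X} (hx : x ∈ labels u) (h : Sub u t) :
    x ∈ labels t := Multiset.mem_of_le (labels_le_of_sub h) hx

lemma mem_labels_of_leaf_sub {x : X} {t : PT X} (h : Sub (PT.leaf x) t) :
    x ∈ labels t := mem_labels_of_sub (by simp [labels]) h

lemma leaf_sub_of_mem {x : X} {t : PT X} (h : x ∈ labels t) : Sub (PT.leaf x) t := by
  induction t with
  | leaf y => simp [labels] at h; subst h; exact Sub.refl _
  | node l r ihl ihr =>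
      simp only [labels, Multiset.mem_add] at h
      rcases h with h | h
      · exact Sub.left (ihl h)
      · exact Sub.right (ihr h)

lemma nodup_of_sub {u t : PT X} (h : Sub u t) (hnd : (labels t).Nodup) :
    (labels u).Nodup := Multiset.nodup_of_le (labels_le_of_sub h) hnd

lemma labels_node_disj {l r : PT X} (hnd : (labels (PT.node l r)).Nodup)
    {x : X} (hl : x ∈ labels l) (hr : x ∈ labels r) : False := by
  have he : labels (PT.node l r) = labels l + labels r := rfl
  rw [he, Multiset.nodup_add] at hnd
  exact Multiset.disjoint_left.mp hnd.2.2 hl hr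

lemma not_sub_both {l r w : PT X} (hnd : (labels (PT.node l r)).Nodup)
    (h1 : Sub w l) (h2 : Sub w r) : False := by
  obtain ⟨x, hx⟩ := labels_nonempty w
  exact labels_node_disj hnd (mem_labels_of_sub hx h1) (mem_labels_of_sub hx h2)

lemma sub_comparable {C u v : PT X} (hnd : (labels C).Nodup)
    (hu : Sub u C) (hv : Sub v C) {x : X} (hxu : x ∈ labels u) (hxv : x ∈ labels v) :
    Sub u v ∨ Sub v u := by
  induction C with
  | leaf y =>
      cases hu with
      | refl => exact Or.inr hv
  | node l r ihl ihr =>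
      rcases sub_node_inv hu with rfl | hu' | hu'
      · exact Or.inr hv
      · rcases sub_node_inv hv with rfl | hv' | hv'
        · exact Or.inl hu
        · exact ihl (nodup_of_sub (Sub.left (Sub.refl l)) hnd) hu' hv'
        · exact (labels_node_disj hnd (mem_labels_of_sub hxu hu')
            (mem_labels_of_sub hxv hv')).elim
      · rcases sub_node_inv hv with rfl | hv' | hv'
        · exact Or.inl hu
        · exact (labels_node_disj hnd (mem_labels_of_sub hxv hv')
            (mem_labels_of_sub hxu hu')).elim
        · exact ihr (nodup_of_sub (Sub.right (Sub.refl r)) hnd) hu' hv'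

lemma sub_comparable' {C u v w : PT X} (hnd : (labels C).Nodup)
    (hu : Sub u C) (hv : Sub v C) (hwu : Sub w u) (hwv : Sub w v) :
    Sub u v ∨ Sub v u := by
  obtain ⟨x, hx⟩ := labels_nonempty w
  exact sub_comparable hnd hu hv (mem_labels_of_sub hx hwu) (mem_labels_of_sub hx hwv)

lemma parent_unique_aux {u v a y : PT X} (hndv : (labels v).Nodup)
    (huv : Sub u v) (hau : Sub a u) (hua : psz a < psz u)
    (hv' : v = PT.node a y ∨ v = PT.node y a) : u = v := by
  rcases hv' with rfl | rfl
  · rcases sub_node_inv huv with h | h | h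
    · exact h
    · exact absurd h.psz_le (by omega)
    · exact (not_sub_both hndv (Sub.refl a) (hau.trans' h)).elim
  · rcases sub_node_inv huv with h | h | h
    · exact h
    · exact (not_sub_both hndv (hau.trans' h) (Sub.refl a)).elim
    · exact absurd h.psz_le (by omega)

lemma parent_unique {C u v a x y : PT X} (hnd : (labels C).Nodup)
    (hu : Sub u C) (hv : Sub v C)
    (hu' : u = PT.node a x ∨ u = PT.node x a)
    (hv' : v = PT.node a y ∨ v = PT.node y a) : u = v := by
  have hau : Sub a u := by
    rcases hu' with rfl | rfl
    · exact Sub.left (Sub.refl a)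
    · exact Sub.right (Sub.refl a)
  have hav : Sub a v := by
    rcases hv' with rfl | rfl
    · exact Sub.left (Sub.refl a)
    · exact Sub.right (Sub.refl a)
  have hua : psz a < psz u := by
    rcases hu' with rfl | rfl <;> simp only [psz] <;> omega
  have hva : psz a < psz v := by
    rcases hv' with rfl | rfl <;> simp only [psz] <;> omega
  rcases sub_comparable' hnd hu hv hau hav with h | h
  · exact parent_unique_aux (nodup_of_sub hv hnd) h hau hua hv'
  · exact (parent_unique_aux (nodup_of_sub hu hnd) h hav hva hu').symm

end ShiftAux

section ShiftAux2
set_option linter.unusedSectionVars false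
variable {X : Type} [DecidableEq X]

/-- Combine the two kept components of the children. -/
def onode : Option (PT X) → Option (PT X) → Option (PT X)
  | some a, some b => some (.node a b)
  | some a, none => some a
  | none, some b => some b
  | none, none => none

@[simp] lemma onode_none_right (a : Option (PT X)) : onode a none = a := by
  cases a <;> rfl

@[simp] lemma onode_none_left (b : Option (PT X)) : onode none b = b := by
  cases b <;> rfl

/-- Effective kept component of a child. -/
def Keff (G : Finset (PT X)) (t : PT X) : Option (PT X) :=
  if t ∈ G then none else (cutAll G t).1

/-- Effective detached multiset of a child. -/
def Meff (G : Finset (PT X)) (t : PT X) : Multiset (PT X) :=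
  if t ∈ G then (cutAll G t).2 + (↑(cutAll G t).1.toList : Multiset (PT X))
  else (cutAll G t).2

lemma cutAll_node (G : Finset (PT X)) (l r : PT X) :
    cutAll G (PT.node l r) = (onode (Keff G l) (Keff G r), Meff G l + Meff G r) := by
  by_cases hl : l ∈ G <;> by_cases hr : r ∈ G <;>
    cases hcl : (cutAll G l).1 <;> cases hcr : (cutAll G r).1 <;>
    simp [cutAll, Keff, Meff, onode, hl, hr, hcl, hcr]

lemma cutAll_node_fst (G : Finset (PT X)) (l r : PT X) :
    (cutAll G (PT.node l r)).1 = onode (Keff G l) (Keff G r) := by rw [cutAll_node]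

lemma cutAll_node_snd (G : Finset (PT X)) (l r : PT X) :
    (cutAll G (PT.node l r)).2 = Meff G l + Meff G r := by rw [cutAll_node]

lemma Keff_of_mem {G : Finset (PT X)} {t : PT X} (h : t ∈ G) : Keff G t = none := by
  simp [Keff, h]

lemma Keff_of_not_mem {G : Finset (PT X)} {t : PT X} (h : t ∉ G) :
    Keff G t = (cutAll G t).1 := by simp [Keff, h]

lemma Meff_of_mem {G : Finset (PT X)} {t : PT X} (h : t ∈ G) :
    Meff G t = (cutAll G t).2 + (↑(cutAll G t).1.toList : Multiset (PT X)) := by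
  simp [Meff, h]

lemma Meff_of_not_mem {G : Finset (PT X)} {t : PT X} (h : t ∉ G) :
    Meff G t = (cutAll G t).2 := by simp [Meff, h]

lemma Keff_congr {G G' : Finset (PT X)} {s : PT X}
    (h1 : cutAll G s = cutAll G' s) (h2 : s ∈ G ↔ s ∈ G') : Keff G s = Keff G' s := by
  unfold Keff; rw [h1]; by_cases h : s ∈ G
  · simp [h, h2.mp h]
  · have h' : s ∉ G' := fun hh => h (h2.mpr hh)
    simp [h, h']

lemma Meff_congr {G G' : Finset (PT X)} {s : PT X}
    (h1 : cutAll G s = cutAll G' s) (h2 : s ∈ G ↔ s ∈ G') : Meff G s = Meff G' s := by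
  unfold Meff; rw [h1]; by_cases h : s ∈ G
  · simp [h, h2.mp h]
  · have h' : s ∉ G' := fun hh => h (h2.mpr hh)
    simp [h, h']

lemma not_node_sub_left {l r : PT X} : ¬ Sub (PT.node l r) l := fun h => by
  have := h.psz_le; simp only [psz] at this; omega

lemma not_node_sub_right {l r : PT X} : ¬ Sub (PT.node l r) r := fun h => by
  have := h.psz_le; simp only [psz] at this; omega

lemma cutAll_congr {G G' : Finset (PT X)} :
    ∀ t : PT X, (∀ s, Sub s t → s ≠ t → (s ∈ G ↔ s ∈ G')) → cutAll G t = cutAll G' t := by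
  intro t
  induction t with
  | leaf x => intro _; rfl
  | node l r ihl ihr =>
      intro h
      have hl : cutAll G l = cutAll G' l := ihl (fun s hs hne =>
        h s (Sub.left hs) (fun heq => not_node_sub_left (by rw [← heq]; exact hs)))
      have hr : cutAll G r = cutAll G' r := ihr (fun s hs hne =>
        h s (Sub.right hs) (fun heq => not_node_sub_right (by rw [← heq]; exact hs)))
      have hml : l ∈ G ↔ l ∈ G' :=
        h l (Sub.left (Sub.refl l)) (fun heq => not_node_sub_left (by rw [← heq]; exact Sub.refl l))
      have hmr : r ∈ G ↔ r ∈ G' :=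
        h r (Sub.right (Sub.refl r)) (fun heq => not_node_sub_right (by rw [← heq]; exact Sub.refl r))
      rw [cutAll_node, cutAll_node, Keff_congr hl hml, Keff_congr hr hmr,
        Meff_congr hl hml, Meff_congr hr hmr]

/-- If the kept part survives, some leaf has an `E`-free path to the root. -/
lemma keep_some_free {G : Finset (PT X)} :
    ∀ {t : PT X}, (labels t).Nodup → ∀ {b : PT X}, (cutAll G t).1 = some b →
      ∃ x, Sub (PT.leaf x) t ∧ ∀ s, Sub (PT.leaf x) s → Sub s t → s ≠ t → s ∉ G := by
  intro t
  induction t with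
  | leaf y =>
      intro _ b _
      exact ⟨y, Sub.refl _, fun s hs1 hs2 hne => absurd (hs2.antisymm' hs1) hne⟩
  | node l r ihl ihr =>
      intro hnd b h
      rw [cutAll_node_fst] at h
      cases hkl : Keff G l with
      | some a =>
          have hlG : l ∉ G := by
            intro hh; rw [Keff_of_mem hh] at hkl; exact Option.some_ne_none _ hkl.symm
          rw [Keff_of_not_mem hlG] at hkl
          obtain ⟨x, hx, hfree⟩ := ihl (nodup_of_sub (Sub.left (Sub.refl l)) hnd) hkl
          refine ⟨x, Sub.left hx, ?_⟩
          intro s hs1 hs2 hne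
          rcases sub_node_inv hs2 with rfl | h' | h'
          · exact absurd rfl hne
          · by_cases hsl : s = l
            · subst hsl; exact hlG
            · exact hfree s hs1 h' hsl
          · exact (labels_node_disj hnd (mem_labels_of_leaf_sub hx)
              (mem_labels_of_sub (mem_labels_of_leaf_sub hs1) h')).elim
      | none =>
          rw [hkl, onode_none_left] at h
          have hrG : r ∉ G := by
            intro hh; rw [Keff_of_mem hh] at h; exact Option.some_ne_none _ h.symm
          rw [Keff_of_not_mem hrG] at h
          obtain ⟨x, hx, hfree⟩ := ihr (nodup_of_sub (Sub.right (Sub.refl r)) hnd) h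
          refine ⟨x, Sub.right hx, ?_⟩
          intro s hs1 hs2 hne
          rcases sub_node_inv hs2 with rfl | h' | h'
          · exact absurd rfl hne
          · exact (labels_node_disj hnd
              (mem_labels_of_sub (mem_labels_of_leaf_sub hs1) h')
              (mem_labels_of_leaf_sub hx)).elim
          · by_cases hsr : s = r
            · subst hsr; exact hrG
            · exact hfree s hs1 h' hsr

/-- Sum of label multisets of a forest. -/
def lsum (M : Multiset (PT X)) : Multiset X := (M.map labels).sum

@[simp] lemma lsum_add (A B : Multiset (PT X)) : lsum (A + B) = lsum A + lsum B := by
  simp [lsum]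

@[simp] lemma lsum_zero : lsum (0 : Multiset (PT X)) = 0 := rfl

lemma lsum_onode (a b : Option (PT X)) :
    lsum (↑(onode a b).toList : Multiset (PT X)) =
      lsum (↑a.toList : Multiset (PT X)) + lsum (↑b.toList : Multiset (PT X)) := by
  cases a <;> cases b <;> simp [onode, lsum, labels]

lemma cutAll_labels (G : Finset (PT X)) :
    ∀ t : PT X, lsum (↑(cutAll G t).1.toList : Multiset (PT X)) + lsum (cutAll G t).2
      = labels t := by
  intro t
  induction t with
  | leaf x => simp [cutAll, lsum, labels]
  | node l r ihl ihr =>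
      have key : ∀ s : PT X,
          (lsum (↑(cutAll G s).1.toList : Multiset (PT X)) + lsum (cutAll G s).2 = labels s) →
          lsum (↑(Keff G s).toList : Multiset (PT X)) + lsum (Meff G s) = labels s := by
        intro s ih
        by_cases hs : s ∈ G
        · rw [Keff_of_mem hs, Meff_of_mem hs]
          simp only [Option.toList_none, Multiset.coe_nil, lsum_zero, zero_add, lsum_add]
          rw [← ih]; exact add_comm _ _
        · rw [Keff_of_not_mem hs, Meff_of_not_mem hs]; exact ih
      have hlr : labels (PT.node l r) = labels l + labels r := rfl
      rw [cutAll_node_fst, cutAll_node_snd, lsum_onode, lsum_add, hlr,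
        ← key l ihl, ← key r ihr]
      abel

lemma labelsF_divF (H : Multiset (PT X)) (G : Finset (PT X)) :
    labelsF (divF H G) = labelsF H := by
  induction H using Multiset.induction with
  | empty => rfl
  | cons a H ih =>
      have h1 : divF (a ::ₘ H) G =
          ((↑(cutAll G a).1.toList : Multiset (PT X)) + (cutAll G a).2) + divF H G := by
        simp [divF, Multiset.map_cons, Multiset.sum_cons]
      have h3 : ∀ M : Multiset (PT X), labelsF M = lsum M := fun _ => rfl
      have h2 : lsum (a ::ₘ H) = labels a + lsum H := by simp [lsum]
      rw [h3, h3, h1, lsum_add, lsum_add, cutAll_labels, h2]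
      exact congrArg (labels a + ·) ih

end ShiftAux2

section ShiftAux3
set_option linter.unusedSectionVars false
variable {X : Type} [DecidableEq X]

lemma labels_le_labelsF {D : PT X} {M : Multiset (PT X)} (h : D ∈ M) :
    labels D ≤ labelsF M := by
  obtain ⟨M₂, rfl⟩ := Multiset.exists_cons_of_mem h
  have : labelsF (D ::ₘ M₂) = labels D + labelsF M₂ := by simp [labelsF]
  rw [this]
  exact Multiset.le_add_right _ _

lemma sub_leaf {u : PT X} {y : X} (h : Sub u (PT.leaf y)) : u = PT.leaf y := by
  cases h; rfl

end ShiftAux3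

set_option maxHeartbeats 1600000
/-- **Shifting Lemma** (Bordewich et al.).  Let `F` be a forest of an
`X`-tree, `e` and `f` edges of `F` and `E` a set of edges of `F` with
`f ∈ E` and `e ∉ E`.  If the endpoint `v_f` of `f` closest to `e` is
connected to an endpoint `v_e` of `e` in `F − E`, and no labelled node is
connected to `v_f` in `F − (E ∪ {e})`, then
`F ÷ E = F ÷ ((E ∖ {f}) ∪ {e})`. -/

theorem shifting_lemma {X : Type} [DecidableEq X] (T : PT X)
    (F : Multiset (PT X)) (hF : ForestOf F {T})
    (hnd : (labels T).Nodup)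
    (E : Finset (PT X)) (e f v_e v_f : PT X)
    (hfE : f ∈ E) (heE : e ∉ E)
    (hfedge : ∃ C ∈ F, Sub f C ∧ f ≠ C)
    (heedge : ∃ C ∈ F, Sub e C ∧ e ≠ C)
    (hvf : IsEndpoint F f v_f) (hve : IsEndpoint F e v_e)
    (hconn : ConnAvoiding F E v_f v_e)
    (hnolabel : ∀ x : X, ¬ ConnAvoiding F (insert e E) (PT.leaf x) v_f) :
    divF F E = divF F (insert e (E.erase f)) := by
  classical
  obtain ⟨C₀, hC₀F, m, hmC₀, hvfm, hvem, havoid⟩ := hconn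
  set E' := insert e (E.erase f) with hE'def
  -- global label facts
  have hlabF : (labelsF F).Nodup := by
    obtain ⟨E₀, hE₀⟩ := hF
    rw [← hE₀, labelsF_divF]
    have : labelsF {T} = labels T := by simp [labelsF]
    rw [this]; exact hnd
  have hcompF : ∀ C D, C ∈ F → D ∈ F → ∀ x : X, x ∈ labels C → x ∈ labels D → C = D := by
    intro C D hC hD x hxC hxD
    by_contra hne
    obtain ⟨F₂, rfl⟩ := Multiset.exists_cons_of_mem hC
    have hD2 : D ∈ F₂ := by
      rcases Multiset.mem_cons.mp hD with h | h
      · exact absurd h.symm hne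
      · exact h
    have hsplit : labelsF (C ::ₘ F₂) = labels C + labelsF F₂ := by
      simp [labelsF]
    rw [hsplit, Multiset.nodup_add] at hlabF
    exact Multiset.disjoint_left.mp hlabF.2.2 hxC
      (Multiset.mem_of_le (labels_le_labelsF hD2) hxD)
  have hndC : (labels C₀).Nodup :=
    Multiset.nodup_of_le (labels_le_labelsF hC₀F) hlabF
  have hsub_f_vf : Sub f v_f := by
    rcases hvf with rfl | ⟨_, w, rfl | rfl⟩
    · exact Sub.refl _
    · exact Sub.left (Sub.refl _)
    · exact Sub.right (Sub.refl _)
  have hsub_e_ve : Sub e v_e := by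
    rcases hve with rfl | ⟨_, w, rfl | rfl⟩
    · exact Sub.refl _
    · exact Sub.left (Sub.refl _)
    · exact Sub.right (Sub.refl _)
  have hvfC : Sub v_f C₀ := hvfm.trans' hmC₀
  have hveC : Sub v_e C₀ := hvem.trans' hmC₀
  have hfC : Sub f C₀ := hsub_f_vf.trans' hvfC
  have heC : Sub e C₀ := hsub_e_ve.trans' hveC
  have hef : e ≠ f := fun h => heE (h ▸ hfE)
  have hfeC : f ≠ C₀ := by
    obtain ⟨C', hC'F, hfC', hfne⟩ := hfedge
    obtain ⟨x, hx⟩ := labels_nonempty f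
    have : C' = C₀ := hcompF C' C₀ hC'F hC₀F x
      (mem_labels_of_sub hx hfC') (mem_labels_of_sub hx hfC)
    exact this ▸ hfne
  have heeC : e ≠ C₀ := by
    obtain ⟨C', hC'F, heC', hene⟩ := heedge
    obtain ⟨x, hx⟩ := labels_nonempty e
    have : C' = C₀ := hcompF C' C₀ hC'F hC₀F x
      (mem_labels_of_sub hx heC') (mem_labels_of_sub hx heC)
    exact this ▸ hene
  have hmemE' : ∀ s : PT X, s ≠ e → s ≠ f → (s ∈ E ↔ s ∈ E') := by
    intro s hse hsf
    simp [hE'def, Finset.mem_insert, Finset.mem_erase, hse, hsf]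
  have heE'm : e ∈ E' := by simp [hE'def]
  have hfE'm : f ∉ E' := by
    simp [hE'def, Finset.mem_insert, Finset.mem_erase, Ne.symm hef]
  have hE'elim : ∀ s : PT X, s ∈ E' → s = e ∨ s ∈ E := by
    intro s hs
    rcases Finset.mem_insert.mp hs with h | h
    · exact Or.inl h
    · exact Or.inr (Finset.mem_of_mem_erase h)
  have hcmp : ∀ u v : PT X, Sub u C₀ → Sub v C₀ → ∀ w, Sub w u → Sub w v →
      Sub u v ∨ Sub v u := fun u v hu hv w hwu hwv => sub_comparable' hndC hu hv hwu hwv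
  -- v_f facts
  have hvf_forms : v_f = f ∨ ∃ w, v_f = PT.node f w ∨ v_f = PT.node w f := by
    rcases hvf with h | ⟨_, w, h⟩
    · exact Or.inl h
    · exact Or.inr ⟨w, h⟩
  have hve_forms : v_e = e ∨ ∃ w, v_e = PT.node e w ∨ v_e = PT.node w e := by
    rcases hve with h | ⟨_, w, h⟩
    · exact Or.inl h
    · exact Or.inr ⟨w, h⟩
  have hvf_ne_f : ¬ Sub e f → v_f ≠ f := by
    intro hnef hveq
    have h1 : ¬ OnPathUp v_f m f := (havoid f hfE).1
    have hfm : f = m := by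
      by_contra hne
      exact h1 ⟨hveq ▸ Sub.refl v_f, hveq ▸ hvfm, hne⟩
    exact hnef (hsub_e_ve.trans' (hfm ▸ hvem))
  have hvf_eq_f : Sub e f → v_f = f := by
    intro hefsub
    rcases hvf_forms with h | ⟨w, hw⟩
    · exact h
    · exfalso
      have hvef : Sub v_e f := by
        rcases hve_forms with rfl | ⟨w', hw'⟩
        · exact hefsub
        · rcases hcmp v_e f hveC hfC e hsub_e_ve hefsub with h | h
          · exact h
          · rcases hw' with rfl | rfl
            · rcases sub_node_inv h with h2 | h2 | h2
              · exact h2 ▸ Sub.refl _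
              · exact absurd (hefsub.antisymm' h2) hef
              · exact (not_sub_both (nodup_of_sub hveC hndC) (Sub.refl e)
                  (hefsub.trans' h2)).elim
            · rcases sub_node_inv h with h2 | h2 | h2
              · exact h2 ▸ Sub.refl _
              · exact (not_sub_both (nodup_of_sub hveC hndC)
                  (hefsub.trans' h2) (Sub.refl e)).elim
              · exact absurd (hefsub.antisymm' h2) hef
      have hfnm : f ≠ m := by
        intro hfm
        rcases hw with rfl | rfl
        · exact not_node_sub_left (hfm ▸ hvfm)
        · exact not_node_sub_right (hfm ▸ hvfm)
      exact (havoid f hfE).2 ⟨hvef, hsub_f_vf.trans' hvfm, hfnm⟩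
  -- no cut edges on the connecting path
  have hNoE : ∀ t, Sub e t → ¬ Sub f t → Sub t C₀ → t ∉ E := by
    intro t het hnft htC htE
    by_cases hte : t = e
    · exact heE (hte ▸ htE)
    · have hvet : Sub v_e t := by
        rcases hve_forms with rfl | ⟨w, hw⟩
        · exact het
        · rcases hcmp v_e t hveC htC e hsub_e_ve het with h | h
          · exact h
          · rcases hw with rfl | rfl
            · rcases sub_node_inv h with h2 | h2 | h2
              · exact h2 ▸ Sub.refl _
              · exact absurd (h2.antisymm' het) hte
              · exact (not_sub_both (nodup_of_sub hveC hndC) (Sub.refl e)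
                  (het.trans' h2)).elim
            · rcases sub_node_inv h with h2 | h2 | h2
              · exact h2 ▸ Sub.refl _
              · exact (not_sub_both (nodup_of_sub hveC hndC) (het.trans' h2)
                  (Sub.refl e)).elim
              · exact absurd (h2.antisymm' het) hte
      have htm : Sub t m ∧ t ≠ m := by
        have hfm : Sub f m := hsub_f_vf.trans' hvfm
        rcases hcmp t m htC hmC₀ e het (hsub_e_ve.trans' hvem) with h | h
        · constructor
          · exact h
          · intro hteq; exact hnft (hteq ▸ hfm)
        · exact (hnft (hfm.trans' h)).elim
      exact (havoid t htE).2 ⟨hvet, htm.1, htm.2⟩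
  have hNoF : ∀ t, Sub f t → ¬ Sub e t → t ≠ f → Sub t C₀ → t ∉ E := by
    intro t hft hnet htf htC htE
    have hnef : ¬ Sub e f := fun h => hnet (h.trans' hft)
    have hvft : Sub v_f t := by
      rcases hvf_forms with rfl | ⟨w, hw⟩
      · exact hft
      · rcases hcmp v_f t hvfC htC f hsub_f_vf hft with h | h
        · exact h
        · rcases hw with rfl | rfl
          · rcases sub_node_inv h with h2 | h2 | h2
            · exact h2 ▸ Sub.refl _
            · exact absurd (h2.antisymm' hft) htf
            · exact (not_sub_both (nodup_of_sub hvfC hndC) (Sub.refl f)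
                (hft.trans' h2)).elim
          · rcases sub_node_inv h with h2 | h2 | h2
            · exact h2 ▸ Sub.refl _
            · exact (not_sub_both (nodup_of_sub hvfC hndC) (hft.trans' h2)
                (Sub.refl f)).elim
            · exact absurd (h2.antisymm' hft) htf
    have htm : Sub t m ∧ t ≠ m := by
      have hem : Sub e m := hsub_e_ve.trans' hvem
      rcases hcmp t m htC hmC₀ f hft (hsub_f_vf.trans' hvfm) with h | h
      · constructor
        · exact h
        · intro hteq; exact hnet (hteq ▸ hem)
      · exact (hnet (hem.trans' h)).elim
    exact (havoid t htE).1 ⟨hvft, htm.1, htm.2⟩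
  -- Sub v_f t for nodes strictly above f
  have hvf_sub : ∀ t, Sub f t → t ≠ f → Sub t C₀ → Sub v_f t := by
    intro t hft htf htC
    rcases hvf_forms with rfl | ⟨w, hw⟩
    · exact hft
    · rcases hcmp v_f t hvfC htC f hsub_f_vf hft with h | h
      · exact h
      · rcases hw with rfl | rfl
        · rcases sub_node_inv h with h2 | h2 | h2
          · exact h2 ▸ Sub.refl _
          · exact absurd (h2.antisymm' hft) htf
          · exact (not_sub_both (nodup_of_sub hvfC hndC) (Sub.refl f) (hft.trans' h2)).elim
        · rcases sub_node_inv h with h2 | h2 | h2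
          · exact h2 ▸ Sub.refl _
          · exact (not_sub_both (nodup_of_sub hvfC hndC) (hft.trans' h2) (Sub.refl f)).elim
          · exact absurd (h2.antisymm' hft) htf
  have hconn_self : ∀ (G : Finset (PT X)) (t : PT X), t = v_f → ConnAvoiding F G t v_f := by
    intro G t ht
    subst ht
    exact ⟨C₀, hC₀F, t, hvfC, Sub.refl _, Sub.refl _, fun s _ =>
      ⟨fun ⟨h1, h2, h3⟩ => h3 (h2.antisymm' h1), fun ⟨h1, h2, h3⟩ => h3 (h2.antisymm' h1)⟩⟩
  have hLE : ∀ t c, (t = PT.node e c ∨ t = PT.node c e) → Sub t C₀ → ¬ Sub f t →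
      ConnAvoiding F (insert e E) t v_f := by
    intro t c horient htC hnft
    have hsubet : Sub e t := by
      rcases horient with rfl | rfl
      · exact Sub.left (Sub.refl _)
      · exact Sub.right (Sub.refl _)
    have hntse : ¬ Sub t e := by
      rcases horient with rfl | rfl
      · exact not_node_sub_left
      · exact not_node_sub_right
    have hnvfe : ¬ Sub v_f e := fun h => hnft ((hsub_f_vf.trans' h).trans' hsubet)
    rcases hve_forms with hveq | ⟨w, hw⟩
    · -- v_e = e
      have htm : Sub t m := by
        rcases hcmp t m htC hmC₀ e hsubet (hveq ▸ hvem) with h | h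
        · exact h
        · rcases horient with rfl | rfl
          · rcases sub_node_inv h with h2 | h2 | h2
            · exact h2 ▸ Sub.refl _
            · exact (hnvfe (hvfm.trans' h2)).elim
            · exact (not_sub_both (nodup_of_sub htC hndC) (Sub.refl e)
                ((hveq ▸ hvem : Sub e m).trans' h2)).elim
          · rcases sub_node_inv h with h2 | h2 | h2
            · exact h2 ▸ Sub.refl _
            · exact (not_sub_both (nodup_of_sub htC hndC)
                ((hveq ▸ hvem : Sub e m).trans' h2) (Sub.refl e)).elim
            · exact (hnvfe (hvfm.trans' h2)).elim
      refine ⟨C₀, hC₀F, m, hmC₀, htm, hvfm, ?_⟩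
      intro s hs
      rcases Finset.mem_insert.mp hs with rfl | hsE
      · exact ⟨fun h => hntse h.1, fun h => hnvfe h.1⟩
      · refine ⟨fun h => (havoid s hsE).2 ?_, fun h => (havoid s hsE).1 h⟩
        exact ⟨hveq ▸ (hsubet.trans' h.1), h.2.1, h.2.2⟩
    · -- v_e is a parent of e
      have heqt : t = v_e := parent_unique hndC htC hveC horient hw
      refine ⟨C₀, hC₀F, m, hmC₀, heqt ▸ hvem, hvfm, ?_⟩
      intro s hs
      rcases Finset.mem_insert.mp hs with rfl | hsE
      · exact ⟨fun h => hntse h.1, fun h => hnvfe h.1⟩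
      · exact ⟨fun h => (havoid s hsE).2 (heqt ▸ h), fun h => (havoid s hsE).1 h⟩
  have hLF : ∀ t c, (t = PT.node f c ∨ t = PT.node c f) → Sub t C₀ → ¬ Sub e f →
      t = v_f := by
    intro t c horient htC hnef
    rcases hvf_forms with hveq | ⟨w, hw⟩
    · exact absurd hveq (hvf_ne_f hnef)
    · exact parent_unique hndC htC hvfC horient hw
  have hconn_up : ∀ t c s, (t = PT.node c s ∨ t = PT.node s c) → Sub t C₀ →
      c ∉ E → c ≠ e → ConnAvoiding F (insert e E) c v_f →
      ConnAvoiding F (insert e E) t v_f := by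
    intro t c s horient htC hcE hce hconnc
    obtain ⟨C, hCF, m₁, hm₁C, hcm₁, hvfm₁, hcond⟩ := hconnc
    have hsc : Sub c t := by
      rcases horient with rfl | rfl
      · exact Sub.left (Sub.refl _)
      · exact Sub.right (Sub.refl _)
    have hCeq : C = C₀ := by
      obtain ⟨x, hx⟩ := labels_nonempty c
      exact hcompF C C₀ hCF hC₀F x
        (mem_labels_of_sub hx (hcm₁.trans' hm₁C))
        (mem_labels_of_sub hx (hsc.trans' htC))
    subst hCeq
    rcases hcmp t m₁ htC hm₁C c hsc hcm₁ with htm | hmt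
    · exact ⟨C, hCF, m₁, hm₁C, htm, hvfm₁, fun s' hs' =>
        ⟨fun h => (hcond s' hs').1 ⟨hsc.trans' h.1, h.2.1, h.2.2⟩,
         fun h => (hcond s' hs').2 h⟩⟩
    · refine ⟨C, hCF, t, htC, Sub.refl t, hvfm₁.trans' hmt, fun s' hs' =>
        ⟨fun h => h.2.2 (h.2.1.antisymm' h.1), ?_⟩⟩
      rintro ⟨h1, h2, h3⟩
      by_cases hm₁t : m₁ = t
      · exact (hcond s' hs').2 ⟨h1, hm₁t ▸ h2, fun hh => h3 (hh.trans hm₁t)⟩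
      · have hm₁c : m₁ = c := by
          rcases horient with rfl | rfl
          · rcases sub_node_inv hmt with h' | h' | h'
            · exact absurd h' hm₁t
            · exact h'.antisymm' hcm₁
            · exact ((not_sub_both (nodup_of_sub htC hndC) (Sub.refl c)
                (hcm₁.trans' h')).elim : m₁ = c)
          · rcases sub_node_inv hmt with h' | h' | h'
            · exact absurd h' hm₁t
            · exact ((not_sub_both (nodup_of_sub htC hndC)
                (hcm₁.trans' h') (Sub.refl c)).elim : m₁ = c)
            · exact h'.antisymm' hcm₁
        subst hm₁c
        rcases horient with rfl | rfl
        · rcases sub_node_inv h2 with h' | h' | h'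
          · exact h3 h'
          · by_cases hsc' : s' = m₁
            · subst hsc'
              rcases Finset.mem_insert.mp hs' with h'' | h''
              · exact hce h''
              · exact hcE h''
            · exact (hcond s' hs').2 ⟨h1, h', hsc'⟩
          · exact not_sub_both (nodup_of_sub htC hndC) hvfm₁ (h1.trans' h')
        · rcases sub_node_inv h2 with h' | h' | h'
          · exact h3 h'
          · exact not_sub_both (nodup_of_sub htC hndC) (h1.trans' h') hvfm₁
          · by_cases hsc' : s' = m₁
            · subst hsc'
              rcases Finset.mem_insert.mp hs' with h'' | h''
              · exact hce h''
              · exact hcE h''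
            · exact (hcond s' hs').2 ⟨h1, h', hsc'⟩
  have hkill : ∀ t c r, (t = PT.node c r ∨ t = PT.node r c) → Sub t C₀ →
      ConnAvoiding F (insert e E) t v_f → ¬ Sub e r → r ∉ E →
      ((t ∉ E ∧ t ≠ e) ∨ Sub v_f t) → (cutAll E r).1 = none := by
    intro t c r horient htC hconnt hner hrE hside
    cases hkr : (cutAll E r).1 with
    | none => rfl
    | some b =>
      exfalso
      have hsrt : Sub r t := by
        rcases horient with rfl | rfl
        · exact Sub.right (Sub.refl _)
        · exact Sub.left (Sub.refl _)
      have hrC : Sub r C₀ := hsrt.trans' htC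
      obtain ⟨x, hx, hfree⟩ := keep_some_free (nodup_of_sub hrC hndC) hkr
      obtain ⟨C, hCF, m₁, hm₁C, htm₁, hvfm₁, hcond⟩ := hconnt
      have hCeq : C = C₀ := by
        obtain ⟨y, hy⟩ := labels_nonempty t
        exact hcompF C C₀ hCF hC₀F y
          (mem_labels_of_sub hy (htm₁.trans' hm₁C)) (mem_labels_of_sub hy htC)
      rw [hCeq] at hm₁C
      have hrne : r ≠ e := fun h => hner (by rw [h]; exact Sub.refl e)
      have hlow : ∀ s', s' ∈ insert e E → Sub (PT.leaf x) s' → Sub s' t →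
          s' ≠ t → False := by
        intro s' hs' h1 h2 h3
        have hs'C : Sub s' C₀ := h2.trans' htC
        have hmemcase : s' = r → False := by
          intro hh; subst hh
          rcases Finset.mem_insert.mp hs' with h'' | h''
          · exact hrne h''
          · exact hrE h''
        rcases hcmp s' r hs'C hrC (PT.leaf x) h1 hx with h' | h'
        · by_cases hsr : s' = r
          · exact hmemcase hsr
          · rcases Finset.mem_insert.mp hs' with h'' | h''
            · exact hner (h'' ▸ h')
            · exact hfree s' h1 h' hsr h''
        · rcases horient with rfl | rfl
          · rcases sub_node_inv h2 with h'' | h'' | h''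
            · exact h3 h''
            · exact not_sub_both (nodup_of_sub htC hndC) (h'.trans' h'')
                (Sub.refl r)
            · exact hmemcase (h''.antisymm' h')
          · rcases sub_node_inv h2 with h'' | h'' | h''
            · exact h3 h''
            · exact hmemcase (h''.antisymm' h')
            · exact not_sub_both (nodup_of_sub htC hndC) (Sub.refl r)
                (h'.trans' h'')
      rcases hside with ⟨htE, hte⟩ | hvft
      · refine hnolabel x ⟨C₀, hC₀F, m₁, hm₁C, (hx.trans' hsrt).trans' htm₁,
          hvfm₁, ?_⟩
        intro s' hs'
        constructor
        · rintro ⟨h1, h2, h3⟩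
          have hs'C : Sub s' C₀ := h2.trans' hm₁C
          have hxt : Sub (PT.leaf x) t := hx.trans' hsrt
          rcases hcmp s' t hs'C htC (PT.leaf x) h1 hxt with h' | h'
          · by_cases hst : s' = t
            · subst hst
              rcases Finset.mem_insert.mp hs' with h'' | h''
              · exact hte h''
              · exact htE h''
            · exact hlow s' hs' h1 h' hst
          · exact (hcond s' hs').1 ⟨h', h2, h3⟩
        · exact fun h => (hcond s' hs').2 h
      · refine hnolabel x ⟨C₀, hC₀F, t, htC, hx.trans' hsrt, hvft, ?_⟩
        intro s' hs'
        constructor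
        · rintro ⟨h1, h2, h3⟩
          exact hlow s' hs' h1 h2 h3
        · rintro ⟨h1, h2, h3⟩
          have h2' : Sub s' m₁ := h2.trans' htm₁
          have h3' : s' ≠ m₁ := by
            intro hh; subst hh
            exact h3 (h2.antisymm' htm₁)
          exact (hcond s' hs').2 ⟨h1, h2', h3'⟩
  have hsettled : ∀ s, Sub s C₀ → ¬ Sub e s → ¬ Sub f s →
      cutAll E s = cutAll E' s ∧ (s ∈ E ↔ s ∈ E') := by
    intro s hsC hnes hnfs
    have hsne : s ≠ e := fun h => hnes (by rw [h]; exact Sub.refl e)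
    have hsnf : s ≠ f := fun h => hnfs (by rw [h]; exact Sub.refl f)
    refine ⟨cutAll_congr s ?_, hmemE' s hsne hsnf⟩
    intro u hu hne
    exact hmemE' u (fun h => hnes (h ▸ hu)) (fun h => hnfs (h ▸ hu))
  have main : ∀ t : PT X, Sub t C₀ →
      ((¬ Sub e t → ¬ Sub f t → cutAll E t = cutAll E' t) ∧
       (Sub e t → ¬ Sub f t → Keff E t = (cutAll E e).1 ∧ Keff E' t = none ∧
         Meff E' t = Meff E t + (↑(cutAll E e).1.toList : Multiset (PT X)) ∧
         (t = e ∨ (ConnAvoiding F (insert e E) t v_f ∧ t ∉ E ∧ t ∉ E'))) ∧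
       (Sub f t → ¬ Sub e t → Keff E t = none ∧ Keff E' t = (cutAll E' f).1 ∧
         Meff E t = Meff E' t + (↑(cutAll E' f).1.toList : Multiset (PT X)) ∧
         (t = f ∨ (ConnAvoiding F (insert e E) t v_f ∧ t ∉ E ∧ t ∉ E'))) ∧
       (Sub e t → Sub f t →
         (Keff E t = Keff E' t ∧ Meff E t = Meff E' t) ∨
         (Keff E t = (cutAll E e).1 ∧ Keff E' t = (cutAll E' f).1 ∧
           (∃ D, Meff E t = D + (↑(cutAll E' f).1.toList : Multiset (PT X)) ∧
                 Meff E' t = D + (↑(cutAll E e).1.toList : Multiset (PT X))) ∧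
           ConnAvoiding F (insert e E) t v_f ∧ t ∉ E ∧ t ∉ E'))) := by
    intro t
    induction t with
    | leaf y =>
        intro htC
        refine ⟨fun _ _ => rfl, ?_, ?_, ?_⟩
        · intro het _
          have he : e = PT.leaf y := sub_leaf het
          subst he
          refine ⟨?_, Keff_of_mem heE'm, ?_, Or.inl rfl⟩
          · rw [Keff_of_not_mem heE]
          · rw [Meff_of_mem heE'm, Meff_of_not_mem heE]
            rfl
        · intro hft _
          have hf : f = PT.leaf y := sub_leaf hft
          subst hf
          refine ⟨Keff_of_mem hfE, ?_, ?_, Or.inl rfl⟩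
          · rw [Keff_of_not_mem hfE'm]
          · rw [Meff_of_mem hfE, Meff_of_not_mem hfE'm]
            rfl
        · intro het hft
          exact absurd ((sub_leaf het).trans (sub_leaf hft).symm) hef
    | node l r ihl ihr =>
        intro htC
        have hlC : Sub l C₀ := (Sub.left (Sub.refl l)).trans' htC
        have hrC : Sub r C₀ := (Sub.right (Sub.refl r)).trans' htC
        have ihL := ihl hlC
        have ihR := ihr hrC
        have hndt : (labels (PT.node l r)).Nodup := nodup_of_sub htC hndC
        refine ⟨fun hnet hnft => (hsettled _ htC hnet hnft).1, ?_, ?_, ?_⟩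
        -- ===================== P2 =====================
        · intro het hnft
          by_cases hte : PT.node l r = e
          · subst hte
            have hEq : cutAll E (PT.node l r) = cutAll E' (PT.node l r) :=
              cutAll_congr _ (fun u hu hne =>
                hmemE' u hne (fun h => hnft (h ▸ hu)))
            refine ⟨?_, Keff_of_mem heE'm, ?_, Or.inl rfl⟩
            · rw [Keff_of_not_mem heE]
            · rw [Meff_of_mem heE'm, Meff_of_not_mem heE, hEq]
          · have htE : PT.node l r ∉ E := hNoE _ het hnft htC
            have htE' : PT.node l r ∉ E' := by
              intro h
              rcases hE'elim _ h with h1 | h1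
              · exact hte h1
              · exact htE h1
            rcases sub_node_inv het with h | hel | her
            · exact absurd h.symm hte
            · -- e in the left child
              have hner : ¬ Sub e r := fun h => not_sub_both hndt hel h
              have hnfl : ¬ Sub f l := fun h => hnft (Sub.left h)
              have hnfr : ¬ Sub f r := fun h => hnft (Sub.right h)
              obtain ⟨hKl, hKl', hMl', hside⟩ := ihL.2.1 hel hnfl
              obtain ⟨hReq, hRmem⟩ := hsettled r hrC hner hnfr
              have hconnt : ConnAvoiding F (insert e E) (PT.node l r) v_f := by
                rcases hside with rfl | ⟨hcl, hlE, hlE'⟩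
                · exact hLE _ r (Or.inl rfl) htC hnft
                · exact hconn_up _ l r (Or.inl rfl) htC hlE
                    (fun h => hlE' (by rw [h]; exact heE'm)) hcl
              have hKr : Keff E r = none := by
                by_cases hrE : r ∈ E
                · exact Keff_of_mem hrE
                · rw [Keff_of_not_mem hrE]
                  exact hkill _ l r (Or.inl rfl) htC hconnt hner hrE
                    (Or.inl ⟨htE, hte⟩)
              have hKr' : Keff E' r = none := by
                rw [← Keff_congr hReq hRmem]; exact hKr
              have hMr : Meff E r = Meff E' r := Meff_congr hReq hRmem
              refine ⟨?_, ?_, ?_, Or.inr ⟨hconnt, htE, htE'⟩⟩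
              · rw [Keff_of_not_mem htE, cutAll_node_fst, hKl, hKr, onode_none_right]
              · rw [Keff_of_not_mem htE', cutAll_node_fst, hKl', hKr']
                rfl
              · rw [Meff_of_not_mem htE, Meff_of_not_mem htE', cutAll_node_snd,
                  cutAll_node_snd, hMl', hMr]
                exact add_right_comm _ _ _
            · -- e in the right child
              have hnel : ¬ Sub e l := fun h => not_sub_both hndt h her
              have hnfl : ¬ Sub f l := fun h => hnft (Sub.left h)
              have hnfr : ¬ Sub f r := fun h => hnft (Sub.right h)
              obtain ⟨hKr, hKr', hMr', hside⟩ := ihR.2.1 her hnfr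
              obtain ⟨hLeq, hLmem⟩ := hsettled l hlC hnel hnfl
              have hconnt : ConnAvoiding F (insert e E) (PT.node l r) v_f := by
                rcases hside with rfl | ⟨hcr, hrE, hrE'⟩
                · exact hLE _ l (Or.inr rfl) htC hnft
                · exact hconn_up _ r l (Or.inr rfl) htC hrE
                    (fun h => hrE' (by rw [h]; exact heE'm)) hcr
              have hKl : Keff E l = none := by
                by_cases hlE : l ∈ E
                · exact Keff_of_mem hlE
                · rw [Keff_of_not_mem hlE]
                  exact hkill _ r l (Or.inr rfl) htC hconnt hnel hlE
                    (Or.inl ⟨htE, hte⟩)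
              have hKl' : Keff E' l = none := by
                rw [← Keff_congr hLeq hLmem]; exact hKl
              have hMl : Meff E l = Meff E' l := Meff_congr hLeq hLmem
              refine ⟨?_, ?_, ?_, Or.inr ⟨hconnt, htE, htE'⟩⟩
              · rw [Keff_of_not_mem htE, cutAll_node_fst, hKl, hKr, onode_none_left]
              · rw [Keff_of_not_mem htE', cutAll_node_fst, hKl', hKr']
                rfl
              · rw [Meff_of_not_mem htE, Meff_of_not_mem htE', cutAll_node_snd,
                  cutAll_node_snd, hMr', hMl]
                exact (add_assoc _ _ _).symm
        -- ===================== P3 =====================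
        · intro hft hnet
          by_cases htf : PT.node l r = f
          · subst htf
            have hEq : cutAll E (PT.node l r) = cutAll E' (PT.node l r) :=
              cutAll_congr _ (fun u hu hne =>
                hmemE' u (fun h => hnet (h ▸ hu)) hne)
            refine ⟨Keff_of_mem hfE, ?_, ?_, Or.inl rfl⟩
            · rw [Keff_of_not_mem hfE'm]
            · rw [Meff_of_mem hfE, Meff_of_not_mem hfE'm, hEq]
          · have htE : PT.node l r ∉ E := hNoF _ hft hnet htf htC
            have htE' : PT.node l r ∉ E' := by
              intro h
              rcases hE'elim _ h with h1 | h1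
              · exact hnet (by rw [h1]; exact Sub.refl e)
              · exact htE h1
            have hvft : Sub v_f (PT.node l r) := hvf_sub _ hft htf htC
            rcases sub_node_inv hft with h | hfl | hfr
            · exact absurd h.symm htf
            · -- f in the left child
              have hnfr : ¬ Sub f r := fun h => not_sub_both hndt hfl h
              have hnel : ¬ Sub e l := fun h => hnet (Sub.left h)
              have hner : ¬ Sub e r := fun h => hnet (Sub.right h)
              obtain ⟨hKl, hKl', hMl, hside⟩ := ihL.2.2.1 hfl hnel
              obtain ⟨hReq, hRmem⟩ := hsettled r hrC hner hnfr
              have hconnt : ConnAvoiding F (insert e E) (PT.node l r) v_f := by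
                rcases hside with rfl | ⟨hcl, hlE, hlE'⟩
                · have heqvf : PT.node l r = v_f := hLF _ r (Or.inl rfl) htC hnel
                  exact hconn_self _ _ heqvf
                · exact hconn_up _ l r (Or.inl rfl) htC hlE
                    (fun h => hlE' (by rw [h]; exact heE'm)) hcl
              have hKr : Keff E r = none := by
                by_cases hrE : r ∈ E
                · exact Keff_of_mem hrE
                · rw [Keff_of_not_mem hrE]
                  exact hkill _ l r (Or.inl rfl) htC hconnt hner hrE (Or.inr hvft)
              have hKr' : Keff E' r = none := by
                rw [← Keff_congr hReq hRmem]; exact hKr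
              have hMr : Meff E r = Meff E' r := Meff_congr hReq hRmem
              refine ⟨?_, ?_, ?_, Or.inr ⟨hconnt, htE, htE'⟩⟩
              · rw [Keff_of_not_mem htE, cutAll_node_fst, hKl, hKr]
                rfl
              · rw [Keff_of_not_mem htE', cutAll_node_fst, hKl', hKr', onode_none_right]
              · rw [Meff_of_not_mem htE, Meff_of_not_mem htE', cutAll_node_snd,
                  cutAll_node_snd, hMl, hMr]
                exact add_right_comm _ _ _
            · -- f in the right child
              have hnfl : ¬ Sub f l := fun h => not_sub_both hndt h hfr
              have hnel : ¬ Sub e l := fun h => hnet (Sub.left h)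
              have hner : ¬ Sub e r := fun h => hnet (Sub.right h)
              obtain ⟨hKr, hKr', hMr, hside⟩ := ihR.2.2.1 hfr hner
              obtain ⟨hLeq, hLmem⟩ := hsettled l hlC hnel hnfl
              have hconnt : ConnAvoiding F (insert e E) (PT.node l r) v_f := by
                rcases hside with rfl | ⟨hcr, hrE, hrE'⟩
                · have heqvf : PT.node l r = v_f := hLF _ l (Or.inr rfl) htC hner
                  exact hconn_self _ _ heqvf
                · exact hconn_up _ r l (Or.inr rfl) htC hrE
                    (fun h => hrE' (by rw [h]; exact heE'm)) hcr
              have hKl : Keff E l = none := by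
                by_cases hlE : l ∈ E
                · exact Keff_of_mem hlE
                · rw [Keff_of_not_mem hlE]
                  exact hkill _ r l (Or.inr rfl) htC hconnt hnel hlE (Or.inr hvft)
              have hKl' : Keff E' l = none := by
                rw [← Keff_congr hLeq hLmem]; exact hKl
              have hMl : Meff E l = Meff E' l := Meff_congr hLeq hLmem
              refine ⟨?_, ?_, ?_, Or.inr ⟨hconnt, htE, htE'⟩⟩
              · rw [Keff_of_not_mem htE, cutAll_node_fst, hKl, hKr]
                rfl
              · rw [Keff_of_not_mem htE', cutAll_node_fst, hKl', hKr', onode_none_left]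
              · rw [Meff_of_not_mem htE, Meff_of_not_mem htE', cutAll_node_snd,
                  cutAll_node_snd, hMr, hMl]
                exact (add_assoc _ _ _).symm
        -- ===================== P4 =====================
        · intro het hft
          by_cases hte : PT.node l r = e
          · -- t = e , f strictly below e
            subst hte
            rcases sub_node_inv hft with h | hfl | hfr
            · exact absurd h.symm hef
            · -- f in left child of e
              have hnfr : ¬ Sub f r := fun h => not_sub_both hndt hfl h
              obtain ⟨hKl, hKl', hMl, hside⟩ := ihL.2.2.1 hfl not_node_sub_left
              obtain ⟨hReq, hRmem⟩ := hsettled r hrC not_node_sub_right hnfr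
              have hvft : Sub v_f (PT.node l r) := hvf_sub _ hft hef htC
              have hconnt : ConnAvoiding F (insert (PT.node l r) E) (PT.node l r) v_f := by
                rcases hside with rfl | ⟨hcl, hlE, hlE'⟩
                · have heqvf : PT.node l r = v_f :=
                    hLF _ r (Or.inl rfl) htC not_node_sub_left
                  exact hconn_self _ _ heqvf
                · exact hconn_up _ l r (Or.inl rfl) htC hlE
                    (fun h => hlE' (by rw [h]; exact heE'm)) hcl
              have hKr : Keff E r = none := by
                by_cases hrE : r ∈ E
                · exact Keff_of_mem hrE
                · rw [Keff_of_not_mem hrE]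
                  exact hkill _ l r (Or.inl rfl) htC hconnt not_node_sub_right hrE
                    (Or.inr hvft)
              have hKr' : Keff E' r = none := by
                rw [← Keff_congr hReq hRmem]; exact hKr
              have hMr : Meff E r = Meff E' r := Meff_congr hReq hRmem
              refine Or.inl ⟨?_, ?_⟩
              · rw [Keff_of_not_mem heE, Keff_of_mem heE'm, cutAll_node_fst, hKl, hKr]
                rfl
              · rw [Meff_of_not_mem heE, Meff_of_mem heE'm, cutAll_node_snd,
                  cutAll_node_snd, cutAll_node_fst, hKl', hKr', onode_none_right,
                  hMl, hMr]
                exact add_right_comm _ _ _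
            · -- f in right child of e
              have hnfl : ¬ Sub f l := fun h => not_sub_both hndt h hfr
              obtain ⟨hKr, hKr', hMr, hside⟩ := ihR.2.2.1 hfr not_node_sub_right
              obtain ⟨hLeq, hLmem⟩ := hsettled l hlC not_node_sub_left hnfl
              have hvft : Sub v_f (PT.node l r) := hvf_sub _ hft hef htC
              have hconnt : ConnAvoiding F (insert (PT.node l r) E) (PT.node l r) v_f := by
                rcases hside with rfl | ⟨hcr, hrE, hrE'⟩
                · have heqvf : PT.node l r = v_f :=
                    hLF _ l (Or.inr rfl) htC not_node_sub_right
                  exact hconn_self _ _ heqvf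
                · exact hconn_up _ r l (Or.inr rfl) htC hrE
                    (fun h => hrE' (by rw [h]; exact heE'm)) hcr
              have hKl : Keff E l = none := by
                by_cases hlE : l ∈ E
                · exact Keff_of_mem hlE
                · rw [Keff_of_not_mem hlE]
                  exact hkill _ r l (Or.inr rfl) htC hconnt not_node_sub_left hlE
                    (Or.inr hvft)
              have hKl' : Keff E' l = none := by
                rw [← Keff_congr hLeq hLmem]; exact hKl
              have hMl : Meff E l = Meff E' l := Meff_congr hLeq hLmem
              refine Or.inl ⟨?_, ?_⟩
              · rw [Keff_of_not_mem heE, Keff_of_mem heE'm, cutAll_node_fst, hKl, hKr]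
                rfl
              · rw [Meff_of_not_mem heE, Meff_of_mem heE'm, cutAll_node_snd,
                  cutAll_node_snd, cutAll_node_fst, hKl', hKr', onode_none_left,
                  hMl, hMr]
                exact (add_assoc _ _ _).symm
          · by_cases htf : PT.node l r = f
            · -- t = f , e strictly below f
              subst htf
              rcases sub_node_inv het with h | hel | her
              · exact absurd h.symm hte
              · -- e in left child of f
                have hner : ¬ Sub e r := fun h => not_sub_both hndt hel h
                obtain ⟨hKl, hKl', hMl', hside⟩ := ihL.2.1 hel not_node_sub_left
                obtain ⟨hReq, hRmem⟩ := hsettled r hrC hner not_node_sub_right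
                have hveqf : v_f = PT.node l r := hvf_eq_f het
                have hconnt : ConnAvoiding F (insert e E) (PT.node l r) v_f := by
                  exact hconn_self _ _ hveqf.symm
                have hvft : Sub v_f (PT.node l r) := by
                  rw [hveqf]; exact Sub.refl _
                have hKr : Keff E r = none := by
                  by_cases hrE : r ∈ E
                  · exact Keff_of_mem hrE
                  · rw [Keff_of_not_mem hrE]
                    exact hkill _ l r (Or.inl rfl) htC hconnt hner hrE (Or.inr hvft)
                have hKr' : Keff E' r = none := by
                  rw [← Keff_congr hReq hRmem]; exact hKr
                have hMr : Meff E r = Meff E' r := Meff_congr hReq hRmem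
                refine Or.inl ⟨?_, ?_⟩
                · rw [Keff_of_mem hfE, Keff_of_not_mem hfE'm, cutAll_node_fst,
                    hKl', hKr']
                  rfl
                · rw [Meff_of_mem hfE, Meff_of_not_mem hfE'm, cutAll_node_snd,
                    cutAll_node_snd, cutAll_node_fst, hKl, hKr, onode_none_right,
                    hMl', hMr]
                  exact add_right_comm _ _ _
              · -- e in right child of f
                have hnel : ¬ Sub e l := fun h => not_sub_both hndt h her
                obtain ⟨hKr, hKr', hMr', hside⟩ := ihR.2.1 her not_node_sub_right
                obtain ⟨hLeq, hLmem⟩ := hsettled l hlC hnel not_node_sub_left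
                have hveqf : v_f = PT.node l r := hvf_eq_f het
                have hconnt : ConnAvoiding F (insert e E) (PT.node l r) v_f := by
                  exact hconn_self _ _ hveqf.symm
                have hvft : Sub v_f (PT.node l r) := by
                  rw [hveqf]; exact Sub.refl _
                have hKl : Keff E l = none := by
                  by_cases hlE : l ∈ E
                  · exact Keff_of_mem hlE
                  · rw [Keff_of_not_mem hlE]
                    exact hkill _ r l (Or.inr rfl) htC hconnt hnel hlE (Or.inr hvft)
                have hKl' : Keff E' l = none := by
                  rw [← Keff_congr hLeq hLmem]; exact hKl
                have hMl : Meff E l = Meff E' l := Meff_congr hLeq hLmem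
                refine Or.inl ⟨?_, ?_⟩
                · rw [Keff_of_mem hfE, Keff_of_not_mem hfE'm, cutAll_node_fst,
                    hKl', hKr']
                  rfl
                · rw [Meff_of_mem hfE, Meff_of_not_mem hfE'm, cutAll_node_snd,
                    cutAll_node_snd, cutAll_node_fst, hKl, hKr, onode_none_left,
                    hMl, hMr']
                  exact add_assoc _ _ _
            · -- e and f both strictly below t
              rcases sub_node_inv het with h | hel | her
              · exact absurd h.symm hte
              · rcases sub_node_inv hft with h2 | hfl | hfr
                · exact absurd h2.symm htf
                · -- (α) e and f both in the left child
                  have hner : ¬ Sub e r := fun h => not_sub_both hndt hel h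
                  have hnfr : ¬ Sub f r := fun h => not_sub_both hndt hfl h
                  obtain ⟨hReq, hRmem⟩ := hsettled r hrC hner hnfr
                  have htnee : PT.node l r ≠ e := hte
                  have hmemt : (PT.node l r ∈ E ↔ PT.node l r ∈ E') :=
                    hmemE' _ hte htf
                  rcases ihL.2.2.2 hel hfl with ⟨hK, hM⟩ |
                    ⟨hKl, hKl', ⟨D, hMl, hMl'⟩, hcl, hlE, hlE'⟩
                  · have hcutEq : cutAll E (PT.node l r) = cutAll E' (PT.node l r) := by
                      rw [cutAll_node, cutAll_node, hK, hM, Keff_congr hReq hRmem,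
                        Meff_congr hReq hRmem]
                    exact Or.inl ⟨Keff_congr hcutEq hmemt, Meff_congr hcutEq hmemt⟩
                  · have hconnt : ConnAvoiding F (insert e E) (PT.node l r) v_f :=
                      hconn_up _ l r (Or.inl rfl) htC hlE
                        (fun h => hlE' (by rw [h]; exact heE'm)) hcl
                    have hvft : Sub v_f (PT.node l r) := hvf_sub _ hft htf htC
                    have hKr : Keff E r = none := by
                      by_cases hrE : r ∈ E
                      · exact Keff_of_mem hrE
                      · rw [Keff_of_not_mem hrE]
                        exact hkill _ l r (Or.inl rfl) htC hconnt hner hrE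
                          (Or.inr hvft)
                    have hKr' : Keff E' r = none := by
                      rw [← Keff_congr hReq hRmem]; exact hKr
                    have hMr : Meff E r = Meff E' r := Meff_congr hReq hRmem
                    have hkt : (cutAll E (PT.node l r)).1 = (cutAll E e).1 := by
                      rw [cutAll_node_fst, hKl, hKr, onode_none_right]
                    have hkt' : (cutAll E' (PT.node l r)).1 = (cutAll E' f).1 := by
                      rw [cutAll_node_fst, hKl', hKr', onode_none_right]
                    by_cases htE : PT.node l r ∈ E
                    · have htE2 : PT.node l r ∈ E' := hmemt.mp htE
                      refine Or.inl ⟨?_, ?_⟩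
                      · rw [Keff_of_mem htE, Keff_of_mem htE2]
                      · rw [Meff_of_mem htE, Meff_of_mem htE2, cutAll_node_snd,
                          cutAll_node_snd, hkt, hkt', hMl, hMl', hMr]
                        abel
                    · have htE2 : PT.node l r ∉ E' := fun h => htE (hmemt.mpr h)
                      refine Or.inr ⟨?_, ?_, ⟨D + Meff E' r, ?_, ?_⟩, hconnt, htE, htE2⟩
                      · rw [Keff_of_not_mem htE]; exact hkt
                      · rw [Keff_of_not_mem htE2]; exact hkt'
                      · rw [Meff_of_not_mem htE, cutAll_node_snd, hMl, hMr]
                        exact add_right_comm _ _ _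
                      · rw [Meff_of_not_mem htE2, cutAll_node_snd, hMl']
                        exact add_right_comm _ _ _
                · -- (β) e in the left child, f in the right child
                  have hnfl : ¬ Sub f l := fun h => not_sub_both hndt h hfr
                  have hner : ¬ Sub e r := fun h => not_sub_both hndt hel h
                  obtain ⟨hKl, hKl', hMl', hsideL⟩ := ihL.2.1 hel hnfl
                  obtain ⟨hKr, hKr', hMr, hsideR⟩ := ihR.2.2.1 hfr hner
                  have hmemt : (PT.node l r ∈ E ↔ PT.node l r ∈ E') :=
                    hmemE' _ hte htf
                  have hconnt : ConnAvoiding F (insert e E) (PT.node l r) v_f := by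
                    rcases hsideR with rfl | ⟨hcr, hrE, hrE'⟩
                    · have heqvf : PT.node l r = v_f :=
                        hLF _ l (Or.inr rfl) htC hner
                      exact hconn_self _ _ heqvf
                    · exact hconn_up _ r l (Or.inr rfl) htC hrE
                        (fun h => hrE' (by rw [h]; exact heE'm)) hcr
                  have hkt : (cutAll E (PT.node l r)).1 = (cutAll E e).1 := by
                    rw [cutAll_node_fst, hKl, hKr, onode_none_right]
                  have hkt' : (cutAll E' (PT.node l r)).1 = (cutAll E' f).1 := by
                    rw [cutAll_node_fst, hKl', hKr', onode_none_left]
                  by_cases htE : PT.node l r ∈ E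
                  · have htE2 : PT.node l r ∈ E' := hmemt.mp htE
                    refine Or.inl ⟨?_, ?_⟩
                    · rw [Keff_of_mem htE, Keff_of_mem htE2]
                    · rw [Meff_of_mem htE, Meff_of_mem htE2, cutAll_node_snd,
                        cutAll_node_snd, hkt, hkt', hMl', hMr]
                      abel
                  · have htE2 : PT.node l r ∉ E' := fun h => htE (hmemt.mpr h)
                    refine Or.inr ⟨?_, ?_, ⟨Meff E l + Meff E' r, ?_, ?_⟩, hconnt,
                      htE, htE2⟩
                    · rw [Keff_of_not_mem htE]; exact hkt
                    · rw [Keff_of_not_mem htE2]; exact hkt'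
                    · rw [Meff_of_not_mem htE, cutAll_node_snd, hMr]
                      exact (add_assoc _ _ _).symm
                    · rw [Meff_of_not_mem htE2, cutAll_node_snd, hMl']
                      exact add_right_comm _ _ _
              · rcases sub_node_inv hft with h2 | hfl | hfr
                · exact absurd h2.symm htf
                · -- (γ) f in the left child, e in the right child
                  have hnfr : ¬ Sub f r := fun h => not_sub_both hndt hfl h
                  have hnel : ¬ Sub e l := fun h => not_sub_both hndt h her
                  obtain ⟨hKl, hKl', hMl, hsideL⟩ := ihL.2.2.1 hfl hnel
                  obtain ⟨hKr, hKr', hMr', hsideR⟩ := ihR.2.1 her hnfr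
                  have hmemt : (PT.node l r ∈ E ↔ PT.node l r ∈ E') :=
                    hmemE' _ hte htf
                  have hconnt : ConnAvoiding F (insert e E) (PT.node l r) v_f := by
                    rcases hsideL with rfl | ⟨hcl, hlE, hlE'⟩
                    · have heqvf : PT.node l r = v_f :=
                        hLF _ r (Or.inl rfl) htC hnel
                      exact hconn_self _ _ heqvf
                    · exact hconn_up _ l r (Or.inl rfl) htC hlE
                        (fun h => hlE' (by rw [h]; exact heE'm)) hcl
                  have hkt : (cutAll E (PT.node l r)).1 = (cutAll E e).1 := by
                    rw [cutAll_node_fst, hKl, hKr, onode_none_left]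
                  have hkt' : (cutAll E' (PT.node l r)).1 = (cutAll E' f).1 := by
                    rw [cutAll_node_fst, hKl', hKr', onode_none_right]
                  by_cases htE : PT.node l r ∈ E
                  · have htE2 : PT.node l r ∈ E' := hmemt.mp htE
                    refine Or.inl ⟨?_, ?_⟩
                    · rw [Keff_of_mem htE, Keff_of_mem htE2]
                    · rw [Meff_of_mem htE, Meff_of_mem htE2, cutAll_node_snd,
                        cutAll_node_snd, hkt, hkt', hMl, hMr']
                      abel
                  · have htE2 : PT.node l r ∉ E' := fun h => htE (hmemt.mpr h)
                    refine Or.inr ⟨?_, ?_, ⟨Meff E' l + Meff E r, ?_, ?_⟩, hconnt,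
                      htE, htE2⟩
                    · rw [Keff_of_not_mem htE]; exact hkt
                    · rw [Keff_of_not_mem htE2]; exact hkt'
                    · rw [Meff_of_not_mem htE, cutAll_node_snd, hMl]
                      exact add_right_comm _ _ _
                    · rw [Meff_of_not_mem htE2, cutAll_node_snd, hMr']
                      exact (add_assoc _ _ _).symm
                · -- (α') e and f both in the right child
                  have hnel : ¬ Sub e l := fun h => not_sub_both hndt h her
                  have hnfl : ¬ Sub f l := fun h => not_sub_both hndt h hfr
                  obtain ⟨hLeq, hLmem⟩ := hsettled l hlC hnel hnfl
                  have hmemt : (PT.node l r ∈ E ↔ PT.node l r ∈ E') :=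
                    hmemE' _ hte htf
                  rcases ihR.2.2.2 her hfr with ⟨hK, hM⟩ |
                    ⟨hKr, hKr', ⟨D, hMr, hMr'⟩, hcr, hrE, hrE'⟩
                  · have hcutEq : cutAll E (PT.node l r) = cutAll E' (PT.node l r) := by
                      rw [cutAll_node, cutAll_node, hK, hM, Keff_congr hLeq hLmem,
                        Meff_congr hLeq hLmem]
                    exact Or.inl ⟨Keff_congr hcutEq hmemt, Meff_congr hcutEq hmemt⟩
                  · have hconnt : ConnAvoiding F (insert e E) (PT.node l r) v_f :=
                      hconn_up _ r l (Or.inr rfl) htC hrE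
                        (fun h => hrE' (by rw [h]; exact heE'm)) hcr
                    have hvft : Sub v_f (PT.node l r) := hvf_sub _ hft htf htC
                    have hKl : Keff E l = none := by
                      by_cases hlE : l ∈ E
                      · exact Keff_of_mem hlE
                      · rw [Keff_of_not_mem hlE]
                        exact hkill _ r l (Or.inr rfl) htC hconnt hnel hlE
                          (Or.inr hvft)
                    have hKl' : Keff E' l = none := by
                      rw [← Keff_congr hLeq hLmem]; exact hKl
                    have hMl : Meff E l = Meff E' l := Meff_congr hLeq hLmem
                    have hkt : (cutAll E (PT.node l r)).1 = (cutAll E e).1 := by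
                      rw [cutAll_node_fst, hKl, hKr, onode_none_left]
                    have hkt' : (cutAll E' (PT.node l r)).1 = (cutAll E' f).1 := by
                      rw [cutAll_node_fst, hKl', hKr', onode_none_left]
                    by_cases htE : PT.node l r ∈ E
                    · have htE2 : PT.node l r ∈ E' := hmemt.mp htE
                      refine Or.inl ⟨?_, ?_⟩
                      · rw [Keff_of_mem htE, Keff_of_mem htE2]
                      · rw [Meff_of_mem htE, Meff_of_mem htE2, cutAll_node_snd,
                          cutAll_node_snd, hkt, hkt', hMr, hMr', hMl]
                        abel
                    · have htE2 : PT.node l r ∉ E' := fun h => htE (hmemt.mpr h)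
                      refine Or.inr ⟨?_, ?_, ⟨Meff E' l + D, ?_, ?_⟩, hconnt, htE, htE2⟩
                      · rw [Keff_of_not_mem htE]; exact hkt
                      · rw [Keff_of_not_mem htE2]; exact hkt'
                      · rw [Meff_of_not_mem htE, cutAll_node_snd, hMr, hMl]
                        exact (add_assoc _ _ _).symm
                      · rw [Meff_of_not_mem htE2, cutAll_node_snd, hMr']
                        exact (add_assoc _ _ _).symm
  -- ===================== assembly =====================
  have hmainC := (main C₀ (Sub.refl C₀)).2.2.2 heC hfC
  show divF F E = divF F E'
  unfold divF
  congr 1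
  apply Multiset.map_congr rfl
  intro D hD
  by_cases hDC : D = C₀
  · subst hDC
    show (↑(cutAll E D).1.toList : Multiset (PT X)) + (cutAll E D).2
      = (↑(cutAll E' D).1.toList : Multiset (PT X)) + (cutAll E' D).2
    rcases hmainC with ⟨hK, hM⟩ | ⟨hK, hK', ⟨D₀, hM, hM'⟩, _, hCE, hCE'⟩
    · by_cases hCE : D ∈ E
      · have hCE2 : D ∈ E' :=
          (hmemE' _ (fun h => heeC h.symm) (fun h => hfeC h.symm)).mp hCE
        rw [Meff_of_mem hCE, Meff_of_mem hCE2] at hM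
        calc (↑(cutAll E D).1.toList : Multiset (PT X)) + (cutAll E D).2
            = (cutAll E D).2 + ↑(cutAll E D).1.toList := add_comm _ _
          _ = (cutAll E' D).2 + ↑(cutAll E' D).1.toList := hM
          _ = ↑(cutAll E' D).1.toList + (cutAll E' D).2 := add_comm _ _
      · have hCE2 : D ∉ E' := fun h =>
          hCE ((hmemE' _ (fun h' => heeC h'.symm) (fun h' => hfeC h'.symm)).mpr h)
        rw [Keff_of_not_mem hCE, Keff_of_not_mem hCE2] at hK
        rw [Meff_of_not_mem hCE, Meff_of_not_mem hCE2] at hM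
        rw [hK, hM]
    · rw [Keff_of_not_mem hCE] at hK
      rw [Keff_of_not_mem hCE'] at hK'
      rw [Meff_of_not_mem hCE] at hM
      rw [Meff_of_not_mem hCE'] at hM'
      rw [hK, hK', hM, hM']
      abel
  · have hnes : ¬ Sub e D := by
      intro h
      obtain ⟨x, hx⟩ := labels_nonempty e
      exact hDC (hcompF D C₀ hD hC₀F x (mem_labels_of_sub hx h)
        (mem_labels_of_sub hx heC))
    have hnfs : ¬ Sub f D := by
      intro h
      obtain ⟨x, hx⟩ := labels_nonempty f
      exact hDC (hcompF D C₀ hD hC₀F x (mem_labels_of_sub hx h)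
        (mem_labels_of_sub hx hfC))
    have hEq : cutAll E D = cutAll E' D := cutAll_congr D (fun u hu hne =>
      hmemE' u (fun h => hnes (h ▸ hu)) (fun h => hnfs (h ▸ hu)))
    show (↑(cutAll E D).1.toList : Multiset (PT X)) + (cutAll E D).2
      = (↑(cutAll E' D).1.toList : Multiset (PT X)) + (cutAll E' D).2
    rw [hEq]

end Phylo
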